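/- Let H be a complex Hilbert space, let T be a bounded self-adjoint operator on H and let A be a compact self-adjoint operator on H with T ∘ T = 16·I + A ∘ A. Suppose additionally that J is a bounded self-adjoint operator on H with J ∘ J = I and J ∘ T = −T ∘ J. Then there exist bounded self-adjoint idempotent operators P₊ and P₋ on H with P₊ + P₋ = I and P₊ ∘ P₋ = 0, and a compact self-adjoint operator K on H, such that T = 4·P₊ − 4·P₋ + K, and moreover J ∘ P₊ ∘ J = P₋ and J ∘ K ∘ J = −K. -/

import Mathlib

set_option maxHeartbeats 1000000 in
/-- Theorem 4.9 together with Remark 4.10 in abstract form: under the hypotheses of the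
decomposition `T = 4P₊ - 4P₋ + K`, if additionally `J` is a self-adjoint involution
anticommuting with `T`, then the projections can be chosen with `J P₊ J = P₋` and
`J K J = -K`. -/
theorem stmt_6 {H : Type*} [NormedAddCommGroup H] [InnerProductSpace ℂ H] [CompleteSpace H]
    (T A : H →L[ℂ] H) (hT : IsSelfAdjoint T) (hAsa : IsSelfAdjoint A)
    (hAc : IsCompactOperator (⇑A))
    (hTA : T ∘L T = (16 : ℂ) • (1 : H →L[ℂ] H) + A ∘L A)
    (J : H →L[ℂ] H) (hJsa : IsSelfAdjoint J) (hJ2 : J ∘L J = 1)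
    (hJT : J ∘L T = -(T ∘L J)) :
    ∃ Pp Pm K : H →L[ℂ] H,
      IsSelfAdjoint Pp ∧ IsSelfAdjoint Pm ∧
      Pp ∘L Pp = Pp ∧ Pm ∘L Pm = Pm ∧
      Pp + Pm = 1 ∧ Pp ∘L Pm = 0 ∧
      IsSelfAdjoint K ∧ IsCompactOperator (⇑K) ∧
      T = (4 : ℂ) • Pp - (4 : ℂ) • Pm + K ∧
      J ∘L Pp ∘L J = Pm ∧ J ∘L K ∘L J = -K := by
  -- reinterpret compositions as products
  have hTA' : T * T = (16 : ℂ) • (1 : H →L[ℂ] H) + A * A := hTA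
  have hJ2' : J * J = 1 := hJ2
  have hJT' : J * T = -(T * J) := hJT
  -- the spectrum of `T` avoids `(-4, 4)`
  have hA2 : (0 : H →L[ℂ] H) ≤ A * A := by
    simpa [hAsa.star_eq] using star_mul_self_nonneg A
  have h16 : (16 : ℂ) • (1 : H →L[ℂ] H) = algebraMap ℝ (H →L[ℂ] H) 16 := by
    rw [Algebra.algebraMap_eq_smul_one, show ((16:ℂ)) = ((16:ℝ):ℂ) by norm_num,
      Complex.coe_smul]
  have hT2 : T ^ 2 = algebraMap ℝ (H →L[ℂ] H) 16 + A * A := by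
    rw [pow_two, ← h16]; exact hTA'
  have hspec : ∀ x ∈ spectrum ℝ T, 16 ≤ x ^ 2 := by
    intro x hx
    have hx2 : x ^ 2 ∈ spectrum ℝ (T ^ 2) := by
      have := cfc_map_spectrum (R := ℝ) (fun y : ℝ => y ^ 2) T
      rw [cfc_pow_id (R := ℝ) T] at this
      rw [this]
      exact ⟨x, hx, rfl⟩
    have hmem : x ^ 2 - 16 + 16 ∈ spectrum ℝ (T ^ 2) := by simpa using hx2
    rw [spectrum.add_mem_iff] at hmem
    have h0 : (0:ℝ) ≤ x ^ 2 - 16 := by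
      refine spectrum_nonneg_of_nonneg hA2 ?_
      rw [hT2] at hmem
      simpa using hmem
    linarith
  have hne : ∀ x ∈ spectrum ℝ T, x ≠ 0 := fun x hx h0 => by
    have := hspec x hx; rw [h0] at this; norm_num at this
  -- sign function and the involution S
  set f : ℝ → ℝ := fun x => x / |x| with hfdef
  have hcontf : ∀ s : Set ℝ, (∀ x ∈ s, x ≠ 0) → ContinuousOn f s := by
    intro s hs x hx
    exact (ContinuousAt.div continuousAt_id (continuous_abs.continuousAt)
      (by simpa using hs x hx)).continuousWithinAt
  have hfc : ContinuousOn f (spectrum ℝ T) := hcontf _ hne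
  set S : H →L[ℂ] H := cfc f T with hSdef
  have hSsa : IsSelfAdjoint S := cfc_predicate _ T
  have hS2 : S * S = 1 := by
    rw [hSdef, ← cfc_mul f f T hfc hfc]
    rw [show (fun x => f x * f x) = fun x : ℝ => (f x)^2 by ext x; ring]
    calc cfc (fun x : ℝ => (f x)^2) T = cfc (fun _ : ℝ => (1:ℝ)) T := by
          apply cfc_congr
          intro x hx
          have := hne x hx
          rw [hfdef]; field_simp [abs_ne_zero.mpr this]; exact (sq_abs x).symm
      _ = 1 := by rw [cfc_const 1 T hT]; simp
  -- the compact remainder K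
  have hsmul4 : (4:ℂ) • S = (4:ℝ) • S := by
    rw [show ((4:ℂ)) = ((4:ℝ):ℂ) by norm_num, Complex.coe_smul]
  set K : H →L[ℂ] H := T - (4:ℂ) • S with hKdef
  have hKsa : IsSelfAdjoint K := by
    rw [hKdef, IsSelfAdjoint, star_sub, star_smul, hT.star_eq, hSsa.star_eq]
    norm_num
  have hKfact : K = (A * A) * cfc (fun x : ℝ => x / (|x| * (|x| + 4))) T := by
    set m : ℝ → ℝ := fun x => x / (|x| * (|x| + 4)) with hm
    have hmc : ContinuousOn m (spectrum ℝ T) := by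
      intro x hx
      have hx0 : x ≠ 0 := hne x hx
      have habs : |x| * (|x| + 4) ≠ 0 := by positivity
      exact (ContinuousAt.div continuousAt_id
        ((continuous_abs.continuousAt).mul
          ((continuous_abs.continuousAt).add continuousAt_const)) habs).continuousWithinAt
    have h1 : T - (4:ℝ) • cfc f T = cfc (fun x : ℝ => x - 4 * f x) T := by
      rw [cfc_sub (fun x : ℝ => x) (fun x => 4 * f x) T (by fun_prop) (continuousOn_const.mul hfc), cfc_id' ℝ T,
        cfc_const_mul 4 f T hfc]
    have h2 : (T^2 - algebraMap ℝ (H →L[ℂ] H) 16) * cfc m T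
        = cfc (fun x : ℝ => (x^2 - 16) * m x) T := by
      rw [cfc_mul _ _ T (by fun_prop) hmc, cfc_sub _ _ T (by fun_prop) (by fun_prop),
        cfc_pow_id (R := ℝ) T, cfc_const 16 T hT]
    have h3 : A * A = T^2 - algebraMap ℝ (H →L[ℂ] H) 16 := by
      rw [hT2]; abel
    rw [hKdef, hsmul4, ← hSdef] at *
    rw [h3, h2, h1]
    apply cfc_congr
    intro x hx
    have hx0 : x ≠ 0 := hne x hx
    have habs : |x| ≠ 0 := abs_ne_zero.mpr hx0
    have habs4 : |x| + 4 ≠ 0 := by positivity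
    rw [hfdef, hm]; simp only
    rw [← sq_abs x]
    field_simp
    ring
  have hKc : IsCompactOperator (⇑K) := by
    rw [hKfact]
    set M := cfc (fun x : ℝ => x / (|x| * (|x| + 4))) T
    have : A * A * M = A ∘L (A ∘L M) := by rw [mul_assoc]; rfl
    rw [this]
    exact hAc.comp_clm (A ∘L M)
  -- conjugation by J
  have hJTJ : J * T * J = -T := by
    rw [hJT', neg_mul, mul_assoc, hJ2', mul_one]
  have hJS : J * S * J = -S := by
    let φ : (H →L[ℂ] H) →⋆ₐ[ℂ] (H →L[ℂ] H) :=
      { toFun := fun x => J * x * J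
        map_one' := by show J * 1 * J = 1; rw [mul_one, hJ2']
        map_mul' := fun x y => by
          show J * (x * y) * J = (J * x * J) * (J * y * J)
          calc J * (x * y) * J = J * x * ((J * J) * (y * J)) := by
                rw [hJ2']; simp [mul_assoc]
            _ = (J * x * J) * (J * y * J) := by simp [mul_assoc]
        map_zero' := by simp
        map_add' := fun x y => by simp [mul_add, add_mul]
        commutes' := fun c => by
          simp only [Algebra.algebraMap_eq_smul_one]
          rw [mul_smul_comm, smul_mul_assoc, mul_one, hJ2']
        map_star' := fun x => by
          simp only [star_mul, hJsa.star_eq, mul_assoc] }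
    have hφc : Continuous φ := by
      show Continuous fun x : H →L[ℂ] H => J * x * J
      exact (continuous_const.mul continuous_id).mul continuous_const
    have hφT : φ T = -T := hJTJ
    have hneg : IsSelfAdjoint (φ T) := by rw [hφT]; exact hT.neg
    have h1 : φ (cfc f T) = cfc f (φ T) := StarAlgHom.map_cfc φ f T hfc hφc hT hneg
    have h2 : cfc f (-T) = -(cfc f T) := by
      rw [← cfc_comp_neg (a := T) (f := f) ?cont hT]
      · rw [← cfc_neg f T]
        apply cfc_congr
        intro x hx
        simp [hfdef, abs_neg, neg_div]
      case cont =>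
        apply hcontf
        rintro x ⟨y, hy, rfl⟩
        simpa using hne y hy
    show φ (cfc f T) = _
    rw [h1, hφT, h2]
  -- the projections
  clear_value S K
  have ePP : (1 + S) * (1 + S) = (2:ℂ) • (1 + S) := by
    rw [add_mul, mul_add, mul_add, hS2]
    simp only [one_mul, mul_one]
    module
  have eMM : (1 - S) * (1 - S) = (2:ℂ) • (1 - S) := by
    rw [sub_mul, mul_sub, mul_sub, hS2]
    simp only [one_mul, mul_one]
    module
  have ePM : (1 + S) * (1 - S) = 0 := by
    rw [add_mul, mul_sub, mul_sub, hS2]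
    simp only [one_mul, mul_one]
    abel
  refine ⟨(2:ℂ)⁻¹ • (1 + S), (2:ℂ)⁻¹ • (1 - S), K, ?_, ?_, ?_, ?_, ?_, ?_, hKsa, hKc, ?_, ?_, ?_⟩
  · rw [IsSelfAdjoint, star_smul, star_add, star_one, hSsa.star_eq]
    norm_num
  · rw [IsSelfAdjoint, star_smul, star_sub, star_one, hSsa.star_eq]
    norm_num
  · show ((2:ℂ)⁻¹ • (1 + S)) * ((2:ℂ)⁻¹ • (1 + S)) = (2:ℂ)⁻¹ • (1 + S)
    rw [smul_mul_smul_comm, ePP, smul_smul]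
    norm_num
  · show ((2:ℂ)⁻¹ • (1 - S)) * ((2:ℂ)⁻¹ • (1 - S)) = (2:ℂ)⁻¹ • (1 - S)
    rw [smul_mul_smul_comm, eMM, smul_smul]
    norm_num
  · module
  · show ((2:ℂ)⁻¹ • (1 + S)) * ((2:ℂ)⁻¹ • (1 - S)) = 0
    rw [smul_mul_smul_comm, ePM, smul_zero]
  · rw [hKdef]
    module
  · show J * (((2:ℂ)⁻¹ • (1 + S)) * J) = (2:ℂ)⁻¹ • (1 - S)
    have hJ1S : J * ((1 + S) * J) = 1 - S := by
      rw [add_mul, mul_add, one_mul, hJ2', ← mul_assoc, hJS]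
      abel
    rw [smul_mul_assoc, mul_smul_comm, hJ1S]
  · rw [hKdef]
    show J * ((T - (4:ℂ) • S) * J) = -(T - (4:ℂ) • S)
    rw [sub_mul, mul_sub, smul_mul_assoc, mul_smul_comm, ← mul_assoc, ← mul_assoc, hJTJ, hJS]
    module
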